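/- Fix integers d ≥ 1 and d' ≥ 0, and let H(t, z, x) = 2^{−(d+d')} (π t)^{−(d + d'/2)} exp(−(2 Σ_{i=1}^d |z_i|² + Σ_{j=1}^{d'} x_j²)/(4t)) be the heat kernel on ℂ^d × ℝ^{d'}. Then for every (z, x) ∈ ℂ^d × ℝ^{d'} with (z, x) ≠ 0 and every 1 ≤ i ≤ d, the Schwinger-time integral of the ∂̄*-component of the heat kernel converges and equals the corresponding coefficient of the generalized Bochner–Martinelli kernel: ∫₀^∞ (z̄_i / t) · H(t, z, x) dt = (2^d Γ(d + d'/2) / π^{d + d'/2}) · z̄_i / (2 Σ_{k=1}^d |z_k|² + Σ_{j=1}^{d'} x_j²)^{d + d'/2}. -/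

import Mathlib

open MeasureTheory
open scoped BigOperators

/-- The heat kernel `H(t, z, x)` on `ℂ^d × ℝ^{d'}`:
`H = 2^{-(d+d')} (π t)^{-(d + d'/2)} exp(-(2 ∑ |z_i|² + ∑ x_j²)/(4t))`. -/
noncomputable def heatH (d d' : ℕ) (t : ℝ) (z : Fin d → ℂ) (x : Fin d' → ℝ) : ℝ :=
  (2 : ℝ) ^ (-((d : ℝ) + (d' : ℝ))) * (Real.pi * t) ^ (-((d : ℝ) + (d' : ℝ) / 2)) *
    Real.exp (-(2 * ∑ i, ‖z i‖ ^ 2 + ∑ j, (x j) ^ 2) / (4 * t))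

open Real Set in
/-- Auxiliary: `∫₀^∞ t^{-s-1} exp(-c/t) dt = Γ(s) c^{-s}` for `s, c > 0`. -/
lemma schwinger_aux {s c : ℝ} (hs : 0 < s) (hc : 0 < c) :
    IntegrableOn (fun t : ℝ => t ^ (-s - 1) * Real.exp (-(c / t))) (Set.Ioi 0) ∧
    ∫ t in Set.Ioi (0 : ℝ), t ^ (-s - 1) * Real.exp (-(c / t)) =
      Real.Gamma s * c ^ (-s) := by
  set f : ℝ → ℝ := fun u => u ^ (s - 1) * Real.exp (-c * u) with hf
  have hf_int : IntegrableOn f (Ioi 0) := by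
    have := integrableOn_rpow_mul_exp_neg_mul_rpow (p := 1) (s := s - 1) (b := c)
      (by linarith) one_pos hc
    simpa [hf, Real.rpow_one] using this
  have hEq : ∀ x ∈ Ioi (0 : ℝ),
      x ^ ((-1 : ℝ) - 1) • f (x ^ (-1 : ℝ)) = x ^ (-s - 1) * Real.exp (-(c / x)) := by
    intro x hx
    have hx' : (0 : ℝ) < x := hx
    have h1 : x ^ (-1 : ℝ) = x⁻¹ := Real.rpow_neg_one x
    have h2 : (x⁻¹ : ℝ) ^ (s - 1) = x ^ (-(s - 1)) := by
      rw [← Real.rpow_neg_one x, ← Real.rpow_mul hx'.le]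
      ring_nf
    have h3 : x ^ ((-1 : ℝ) - 1) * x ^ (-(s - 1)) = x ^ (-s - 1) := by
      rw [← Real.rpow_add hx']; ring_nf
    have h4 : -c * x⁻¹ = -(c / x) := by field_simp
    simp only [hf, h1, h2, h4, smul_eq_mul]
    rw [← mul_assoc, h3]
  constructor
  · have := (integrableOn_Ioi_comp_rpow_iff' f (p := -1) (by norm_num)).mpr hf_int
    exact (integrableOn_congr_fun hEq measurableSet_Ioi).mp this
  · have hsub := integral_comp_rpow_Ioi f (p := -1) (by norm_num : (-1 : ℝ) ≠ 0)
    have hval : ∫ u in Ioi (0 : ℝ), f u = c ^ (-s) * Real.Gamma s := by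
      have := integral_rpow_mul_exp_neg_mul_rpow (p := 1) (q := s - 1) (b := c)
        one_pos (by linarith) hc
      simp only [Real.rpow_one] at this
      rw [hf]
      simp only [this]
      norm_num
    calc ∫ t in Ioi (0 : ℝ), t ^ (-s - 1) * Real.exp (-(c / t))
        = ∫ x in Ioi (0 : ℝ), (|(-1 : ℝ)| * x ^ ((-1 : ℝ) - 1)) • f (x ^ (-1 : ℝ)) := by
          refine (setIntegral_congr_fun measurableSet_Ioi fun x hx => ?_).symm
          rw [abs_neg, abs_one, one_mul]
          exact hEq x hx
      _ = ∫ u in Ioi (0 : ℝ), f u := hsub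
      _ = Real.Gamma s * c ^ (-s) := by rw [hval, mul_comm]

/-- For every `(z, x) ≠ 0` and `1 ≤ i ≤ d`, the Schwinger-time integral
`∫₀^∞ (z̄_i / t) H(t, z, x) dt` converges and equals the corresponding coefficient of the
generalized Bochner–Martinelli kernel,
`(2^d Γ(d + d'/2) / π^{d + d'/2}) · z̄_i / (2 ∑ |z_k|² + ∑ x_j²)^{d + d'/2}`. -/
theorem schwinger_integral_bochner_martinelli (d d' : ℕ) (hd : 1 ≤ d)
    (z : Fin d → ℂ) (x : Fin d' → ℝ) (hzx : (z, x) ≠ 0) (i : Fin d) :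
    IntegrableOn
      (fun t : ℝ => ((starRingEnd ℂ) (z i) / (t : ℂ)) * (heatH d d' t z x : ℂ))
      (Set.Ioi 0) ∧
    ∫ t in Set.Ioi (0 : ℝ), ((starRingEnd ℂ) (z i) / (t : ℂ)) * (heatH d d' t z x : ℂ) =
      (((2 : ℝ) ^ d * Real.Gamma ((d : ℝ) + (d' : ℝ) / 2) /
          Real.pi ^ ((d : ℝ) + (d' : ℝ) / 2) /
          (2 * ∑ k, ‖z k‖ ^ 2 + ∑ j, (x j) ^ 2) ^ ((d : ℝ) + (d' : ℝ) / 2)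
          : ℝ) : ℂ) *
        (starRingEnd ℂ) (z i) := by
  set s : ℝ := (d : ℝ) + (d' : ℝ) / 2 with hsdef
  set a : ℝ := 2 * ∑ k, ‖z k‖ ^ 2 + ∑ j, (x j) ^ 2 with hadef
  have hd1 : (1 : ℝ) ≤ (d : ℝ) := by exact_mod_cast hd
  have hs : 0 < s := by
    have h2 : (0 : ℝ) ≤ (d' : ℝ) / 2 := by positivity
    simp only [hsdef]; linarith
  have ha : 0 < a := by
    have hzsum : (0 : ℝ) ≤ ∑ k, ‖z k‖ ^ 2 :=
      Finset.sum_nonneg fun k _ => by positivity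
    have hxsum : (0 : ℝ) ≤ ∑ j, (x j) ^ 2 :=
      Finset.sum_nonneg fun j _ => by positivity
    have hor : z ≠ 0 ∨ x ≠ 0 := by
      by_contra h
      push_neg at h
      exact hzx (by rw [Prod.ext_iff]; exact ⟨h.1, h.2⟩)
    rcases hor with hz | hx
    · obtain ⟨k, hk⟩ := Function.ne_iff.mp hz
      have hpos : 0 < ∑ k, ‖z k‖ ^ 2 :=
        Finset.sum_pos' (fun k _ => by positivity)
          ⟨k, Finset.mem_univ k, pow_pos (norm_pos_iff.mpr hk) 2⟩
      simp only [hadef]; linarith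
    · obtain ⟨j, hj⟩ := Function.ne_iff.mp hx
      have hpos : 0 < ∑ j, (x j) ^ 2 :=
        Finset.sum_pos' (fun j _ => by positivity)
          ⟨j, Finset.mem_univ j, pow_two_pos_of_ne_zero hj⟩
      simp only [hadef]; linarith
  set K : ℝ := (2 : ℝ) ^ (-((d : ℝ) + (d' : ℝ))) * Real.pi ^ (-s) with hKdef
  have hEqC : (fun t : ℝ => ((starRingEnd ℂ) (z i) / (t : ℂ)) * (heatH d d' t z x : ℂ))
      = fun t : ℝ => (starRingEnd ℂ) (z i) * ((heatH d d' t z x / t : ℝ) : ℂ) := by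
    funext t
    push_cast
    ring
  have hEqR : ∀ t ∈ Set.Ioi (0 : ℝ),
      heatH d d' t z x / t = K * (t ^ (-s - 1) * Real.exp (-(a / 4 / t))) := by
    intro t ht
    have ht' : (0 : ℝ) < t := ht
    have hmul : (Real.pi * t) ^ (-s) = Real.pi ^ (-s) * t ^ (-s) :=
      Real.mul_rpow Real.pi_pos.le ht'.le
    have hts : t ^ (-s) / t = t ^ (-s - 1) := by
      rw [div_eq_mul_inv, ← Real.rpow_neg_one t, ← Real.rpow_add ht']
      ring_nf
    have hexp : -a / (4 * t) = -(a / 4 / t) := by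
      field_simp
    rw [heatH, ← hsdef, ← hadef, hmul, hexp, hKdef]
    rw [show (2 : ℝ) ^ (-((d : ℝ) + (d' : ℝ))) * (Real.pi ^ (-s) * t ^ (-s)) *
        Real.exp (-(a / 4 / t)) / t =
        (2 : ℝ) ^ (-((d : ℝ) + (d' : ℝ))) * Real.pi ^ (-s) *
          (t ^ (-s) / t * Real.exp (-(a / 4 / t))) by ring, hts]
  have hc4 : (0 : ℝ) < a / 4 := by positivity
  have hReal := schwinger_aux hs hc4
  have hRealInt : IntegrableOn (fun t : ℝ => heatH d d' t z x / t) (Set.Ioi 0) := by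
    have h1 : IntegrableOn
        (fun t : ℝ => K * (t ^ (-s - 1) * Real.exp (-(a / 4 / t)))) (Set.Ioi 0) :=
      hReal.1.const_mul K
    exact (integrableOn_congr_fun hEqR measurableSet_Ioi).mpr h1
  have hRealVal : ∫ t in Set.Ioi (0 : ℝ), heatH d d' t z x / t
      = K * (Real.Gamma s * (a / 4) ^ (-s)) := by
    rw [setIntegral_congr_fun measurableSet_Ioi hEqR, integral_const_mul, hReal.2]
  have hconst : K * (Real.Gamma s * (a / 4) ^ (-s))
      = (2 : ℝ) ^ d * Real.Gamma s / Real.pi ^ s / a ^ s := by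
    have h44 : ((a / 4 : ℝ)) ^ (-s) = (2 : ℝ) ^ s * (2 : ℝ) ^ s / a ^ s := by
      rw [Real.rpow_neg (by positivity), Real.div_rpow ha.le (by norm_num : (0:ℝ) ≤ 4),
        inv_div]
      congr 1
      rw [← Real.mul_rpow (by norm_num) (by norm_num)]
      norm_num
    have h2 : (2 : ℝ) ^ (-((d : ℝ) + (d' : ℝ))) * ((2 : ℝ) ^ s * (2 : ℝ) ^ s)
        = (2 : ℝ) ^ d := by
      rw [← Real.rpow_add two_pos, ← Real.rpow_add two_pos, ← Real.rpow_natCast 2 d]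
      congr 1
      simp only [hsdef]; ring
    rw [hKdef, h44, Real.rpow_neg Real.pi_pos.le]
    calc (2 : ℝ) ^ (-((d : ℝ) + (d' : ℝ))) * (Real.pi ^ s)⁻¹ *
          (Real.Gamma s * ((2 : ℝ) ^ s * (2 : ℝ) ^ s / a ^ s))
        = (2 : ℝ) ^ (-((d : ℝ) + (d' : ℝ))) * ((2 : ℝ) ^ s * (2 : ℝ) ^ s) *
            Real.Gamma s * (Real.pi ^ s)⁻¹ / a ^ s := by ring
      _ = (2 : ℝ) ^ d * Real.Gamma s / Real.pi ^ s / a ^ s := by rw [h2]; ring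
  rw [hEqC]
  constructor
  · exact (hRealInt.ofReal (𝕜 := ℂ)).const_mul _
  · rw [integral_const_mul]
    rw [show ∫ t in Set.Ioi (0:ℝ), ((heatH d d' t z x / t : ℝ) : ℂ)
        = ((∫ t in Set.Ioi (0:ℝ), heatH d d' t z x / t : ℝ) : ℂ) from integral_ofReal]
    rw [hRealVal, hconst]
    ring
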